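/- arXiv:1409.4271 — 8 statements merged into one kernel-verified Lean document; each statement's English description precedes it below -/
import Mathlib

section
/- The ordered weighted ℓ1 functional Ω_w(x) = Σ_{i=1}^n w_i |x|_[i], where |x|_[i] denotes the i-th largest component of x in absolute value, is a norm on ℝ^n whenever w_1 ≥ w_2 ≥ ... ≥ w_n ≥ 0 and w ≠ 0. -/
open Finset

/-- The vector of absolute values of `x`, sorted in non-increasing order:
`absSorted x i` is the `(i+1)`-th largest entry of `|x|`. -/
noncomputable def absSorted {n : ℕ} (x : Fin n → ℝ) : Fin n → ℝ :=
  fun i => |x (Tuple.sort (fun j => -|x j|) i)|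

/-- The ordered weighted ℓ₁ functional `Ω_w(x) = ∑ i, w i * |x|_[i]`. -/
noncomputable def owl {n : ℕ} (w x : Fin n → ℝ) : ℝ := ∑ i, w i * absSorted x i

lemma absSorted_antitone {n : ℕ} (x : Fin n → ℝ) : Antitone (absSorted x) := by
  have h := Tuple.monotone_sort (fun j => -|x j|)
  intro i j hij
  have := h hij
  simp only [Function.comp] at this
  simpa [absSorted] using neg_le_neg_iff.mp this

lemma owl_eq_sum_perm {n : ℕ} (w x : Fin n → ℝ) :
    owl w x = ∑ i, w i * |x (Tuple.sort (fun j => -|x j|) i)| := rfl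

/-- Key: for any permutation τ, ∑ w i * |x (τ i)| ≤ owl w x. -/
lemma key {n : ℕ} (w : Fin n → ℝ) (hmono : Antitone w)
    (x : Fin n → ℝ) (τ : Equiv.Perm (Fin n)) :
    ∑ i, w i * |x (τ i)| ≤ owl w x := by
  set σ : Equiv.Perm (Fin n) := Tuple.sort (fun j => -|x j|) with hσ
  have ha : Antitone (absSorted x) := absSorted_antitone x
  have hmv : Monovary w (absSorted x) := by
    intro i j hij
    by_contra h
    push_neg at h
    rcases lt_trichotomy i j with hlt | heq | hgt
    · exact absurd (ha hlt.le) (not_le.mpr hij)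
    · exact absurd rfl (heq ▸ hij.ne')
    · exact absurd (hmono hgt.le) (not_le.mpr h)
  have : ∑ i, w i * |x (τ i)| = ∑ i, w i * absSorted x ((σ⁻¹ * τ) i) := by
    apply Finset.sum_congr rfl
    intro i _
    simp [absSorted, hσ, Equiv.Perm.mul_apply]
  rw [this, owl]
  have := hmv.sum_smul_comp_perm_le_sum_smul (σ := σ⁻¹ * τ)
  simpa [smul_eq_mul] using this

/-- If `w₁ ≥ w₂ ≥ ⋯ ≥ wₙ ≥ 0` and `w ≠ 0`, then `Ω_w` is a norm on `ℝⁿ`: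
nonnegative, positive definite, absolutely homogeneous, and subadditive. -/
theorem owl_is_norm {n : ℕ} (w : Fin n → ℝ) (hmono : Antitone w)
    (hnonneg : ∀ i, 0 ≤ w i) (hne : w ≠ 0) :
    (∀ x : Fin n → ℝ, 0 ≤ owl w x) ∧
    (∀ x : Fin n → ℝ, owl w x = 0 ↔ x = 0) ∧
    (∀ (c : ℝ) (x : Fin n → ℝ), owl w (c • x) = |c| * owl w x) ∧
    (∀ x y : Fin n → ℝ, owl w (x + y) ≤ owl w x + owl w y) := by
  have hnn : ∀ x : Fin n → ℝ, 0 ≤ owl w x := fun x =>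
    Finset.sum_nonneg fun i _ => mul_nonneg (hnonneg i) (abs_nonneg _)
  -- homogeneity
  have hhom : ∀ (c : ℝ) (x : Fin n → ℝ), owl w (c • x) = |c| * owl w x := by
    intro c x
    rcases eq_or_ne c 0 with rfl | hc
    · simp [owl, absSorted]
    have h1 : owl w (c • x) ≤ |c| * owl w x := by
      rw [owl_eq_sum_perm w (c • x)]
      set τ := Tuple.sort (fun j => -|(c • x) j|)
      calc ∑ i, w i * |(c • x) (τ i)| = |c| * ∑ i, w i * |x (τ i)| := by
            rw [Finset.mul_sum]; apply Finset.sum_congr rfl; intro i _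
            simp [abs_mul]; ring
        _ ≤ |c| * owl w x := by
            apply mul_le_mul_of_nonneg_left (key w hmono x τ) (abs_nonneg c)
    have h2 : |c| * owl w x ≤ owl w (c • x) := by
      rw [owl_eq_sum_perm w x]
      set σ := Tuple.sort (fun j => -|x j|)
      have : |c| * ∑ i, w i * |x (σ i)| = ∑ i, w i * |(c • x) (σ i)| := by
        rw [Finset.mul_sum]; apply Finset.sum_congr rfl; intro i _
        simp [abs_mul]; ring
      rw [this]
      exact key w hmono (c • x) σ
    linarith
  refine ⟨hnn, ?_, hhom, ?_⟩
  · intro x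
    constructor
    · intro h
      by_contra hx
      -- some coordinate nonzero
      have hx' : ∃ j, x j ≠ 0 := by
        by_contra h'
        push_neg at h'
        exact hx (funext fun j => h' j)
      obtain ⟨j, hj⟩ := hx'
      -- w 0 > 0
      have hn0 : 0 < n := by
        rcases Nat.eq_zero_or_pos n with rfl | h'
        · exact absurd (Subsingleton.elim w 0) hne
        · exact h'
      have hw0 : 0 < w ⟨0, hn0⟩ := by
        rcases lt_or_eq_of_le (hnonneg ⟨0, hn0⟩) with h' | h'
        · exact h'
        · exfalso; apply hne; funext i
          have := hmono (show (⟨0, hn0⟩ : Fin n) ≤ i from Fin.mk_le_of_le_val (Nat.zero_le _))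
          have := hnonneg i
          simp only [Pi.zero_apply]; linarith
      -- absSorted x 0 > 0
      set σ := Tuple.sort (fun j => -|x j|) with hσ
      have hmax : |x j| ≤ absSorted x ⟨0, hn0⟩ := by
        have : |x j| = absSorted x (σ⁻¹ j) := by simp [absSorted, hσ]
        rw [this]
        exact absSorted_antitone x (Fin.mk_le_of_le_val (Nat.zero_le _))
      have hpos : 0 < absSorted x ⟨0, hn0⟩ := lt_of_lt_of_le (abs_pos.mpr hj) hmax
      have : 0 < owl w x := by
        rw [owl]
        apply Finset.sum_pos' (fun i _ => mul_nonneg (hnonneg i) (abs_nonneg _))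
        exact ⟨⟨0, hn0⟩, Finset.mem_univ _, mul_pos hw0 hpos⟩
      linarith
    · intro h; subst h; simp [owl, absSorted]
  · intro x y
    rw [owl_eq_sum_perm w (x + y)]
    set τ := Tuple.sort (fun j => -|(x + y) j|)
    calc ∑ i, w i * |(x + y) (τ i)|
        ≤ ∑ i, (w i * |x (τ i)| + w i * |y (τ i)|) := by
          apply Finset.sum_le_sum; intro i _
          rw [← mul_add]
          exact mul_le_mul_of_nonneg_left (abs_add_le _ _) (hnonneg i)
      _ = ∑ i, w i * |x (τ i)| + ∑ i, w i * |y (τ i)| := Finset.sum_add_distrib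
      _ ≤ owl w x + owl w y := add_le_add (key w hmono x τ) (key w hmono y τ)
end

section
/- For any x ∈ ℝ^n and weight vector w in the monotone non-negative cone, w̄ ‖x‖_1 ≤ Ω_w(x) ≤ w_1 ‖x‖_1, where w̄ = (Σ_i w_i)/n is the average weight. -/
open Finset

lemma absSorted_sum {n : ℕ} (x : Fin n → ℝ) : ∑ i, absSorted x i = ∑ i, |x i| := by
  exact Equiv.sum_comp (Tuple.sort (fun j => -|x j|)) (fun i => |x i|)

/-- wbar * l1-norm of x <= Omega_w(x) <= w_1 * l1-norm of x, where wbar is the average weight. -/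
theorem owl_l1_bounds {n : ℕ} (hn : 0 < n) (w : Fin n → ℝ) (hmono : Antitone w)
    (hnonneg : ∀ i, 0 ≤ w i) (x : Fin n → ℝ) :
    ((∑ i, w i) / n) * (∑ i, |x i|) ≤ owl w x ∧
    owl w x ≤ w ⟨0, hn⟩ * (∑ i, |x i|) := by
  have habs := absSorted_antitone x
  have hnn : ∀ i, 0 ≤ absSorted x i := fun i => abs_nonneg _
  constructor
  · have hmv : Monovary w (absSorted x) := by
      intro i j hij
      rcases le_or_gt i j with h | h
      · exact absurd (habs h) (not_le.mpr hij)
      · exact hmono h.le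
    have := hmv.sum_mul_sum_le_card_mul_sum
    rw [absSorted_sum] at this
    simp only [Finset.card_univ, Fintype.card_fin] at this
    rw [div_mul_eq_mul_div, div_le_iff₀ (by exact_mod_cast hn)]
    calc (∑ i, w i) * ∑ i, |x i| ≤ n * ∑ i, w i * absSorted x i := this
      _ = owl w x * n := by rw [owl]; ring
  · have : owl w x ≤ ∑ i, w ⟨0, hn⟩ * absSorted x i := by
      apply Finset.sum_le_sum
      intro i _
      exact mul_le_mul_of_nonneg_right (hmono (show (⟨0, hn⟩ : Fin n) ≤ i from Fin.le_def.mpr (Nat.zero_le _))) (hnn i)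
    rwa [← Finset.mul_sum, absSorted_sum] at this
end

section
/- With the OSCAR weights w_i = λ1 + λ2(n − i) for i = 1,...,n (λ1, λ2 ≥ 0), the OWL norm equals the OSCAR regularizer: Ω_w(x) = λ1 ‖x‖_1 + λ2 Σ_{i<j} max{|x_i|, |x_j|}. -/
open Finset

lemma offdiag_eq_two_mul {n : ℕ} (y : Fin n → ℝ) :
    ∑ p ∈ univ.filter (fun p : Fin n × Fin n => p.1 ≠ p.2), max (y p.1) (y p.2) =
      2 * ∑ p ∈ univ.filter (fun p : Fin n × Fin n => p.1 < p.2), max (y p.1) (y p.2) := by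
  classical
  rw [← Finset.sum_filter_add_sum_filter_not _ (fun p : Fin n × Fin n => p.1 < p.2)]
  have h1 : (univ.filter (fun p : Fin n × Fin n => p.1 ≠ p.2)).filter
      (fun p : Fin n × Fin n => p.1 < p.2) =
      univ.filter (fun p : Fin n × Fin n => p.1 < p.2) := by
    ext p; simp only [mem_filter, mem_univ, true_and]
    exact ⟨fun h => h.2, fun h => ⟨ne_of_lt h, h⟩⟩
  have h2 : (univ.filter (fun p : Fin n × Fin n => p.1 ≠ p.2)).filter
      (fun p : Fin n × Fin n => ¬ p.1 < p.2) =
      univ.filter (fun p : Fin n × Fin n => p.2 < p.1) := by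
    ext p; simp only [mem_filter, mem_univ, true_and, not_lt]
    constructor
    · rintro ⟨hne, hle⟩; exact lt_of_le_of_ne hle (by simpa [eq_comm] using hne)
    · intro h; exact ⟨(ne_of_lt h).symm, le_of_lt h⟩
  rw [h1, h2]
  have h3 : ∑ p ∈ univ.filter (fun p : Fin n × Fin n => p.2 < p.1), max (y p.1) (y p.2) =
      ∑ p ∈ univ.filter (fun p : Fin n × Fin n => p.1 < p.2), max (y p.1) (y p.2) := by
    apply Finset.sum_nbij' (fun p => Prod.swap p) (fun p => Prod.swap p)
    · intro p hp; simp only [mem_filter, mem_univ, true_and] at hp ⊢; exact hp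
    · intro p hp; simp only [mem_filter, mem_univ, true_and] at hp ⊢; exact hp
    · intro p _; simp
    · intro p _; simp
    · intro p _; simp [max_comm]
  rw [h3]; ring

lemma offdiag_perm {n : ℕ} (y : Fin n → ℝ) (σ : Equiv.Perm (Fin n)) :
    ∑ p ∈ univ.filter (fun p : Fin n × Fin n => p.1 ≠ p.2), max (y (σ p.1)) (y (σ p.2)) =
      ∑ p ∈ univ.filter (fun p : Fin n × Fin n => p.1 ≠ p.2), max (y p.1) (y p.2) := by
  classical
  apply Finset.sum_nbij' (fun p : Fin n × Fin n => (σ p.1, σ p.2))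
      (fun p : Fin n × Fin n => (σ.symm p.1, σ.symm p.2))
  · intro p hp; simp only [mem_filter, mem_univ, true_and] at hp ⊢
    exact fun h => hp (σ.injective h)
  · intro p hp; simp only [mem_filter, mem_univ, true_and] at hp ⊢
    exact fun h => hp (σ.symm.injective h)
  · intro p _; simp
  · intro p _; simp
  · intro p _; simp

lemma sum_pairs_perm {n : ℕ} (y : Fin n → ℝ) (σ : Equiv.Perm (Fin n)) :
    ∑ p ∈ univ.filter (fun p : Fin n × Fin n => p.1 < p.2), max (y (σ p.1)) (y (σ p.2)) =
      ∑ p ∈ univ.filter (fun p : Fin n × Fin n => p.1 < p.2), max (y p.1) (y p.2) := by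
  have h1 := offdiag_eq_two_mul (fun i => y (σ i))
  have h2 := offdiag_eq_two_mul y
  have h3 := offdiag_perm y σ
  linarith

/-- With OSCAR weights w_i = lambda1 + lambda2 (n - i) (1-indexed), the OWL norm equals
the OSCAR regularizer lambda1 * l1-norm + lambda2 * sum over pairs i<j of max(|x_i|,|x_j|). -/
theorem owl_eq_oscar {n : ℕ} (l1 l2 : ℝ) (hl1 : 0 ≤ l1) (hl2 : 0 ≤ l2) (x : Fin n → ℝ) :
    owl (fun i => l1 + l2 * ((n : ℝ) - 1 - (i : ℕ))) x =
      l1 * (∑ i, |x i|) +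
        l2 * ∑ p ∈ univ.filter (fun p : Fin n × Fin n => p.1 < p.2), max |x p.1| |x p.2| := by
  classical
  set σ : Equiv.Perm (Fin n) := Tuple.sort (fun j => -|x j|) with hσ
  set a : Fin n → ℝ := absSorted x with ha
  have haσ : ∀ i, a i = |x (σ i)| := fun i => rfl
  -- antitone
  have hA : ∀ i j : Fin n, i ≤ j → a j ≤ a i := by
    intro i j hij
    have := Tuple.monotone_sort (fun j => -|x j|) hij
    simp only [Function.comp] at this
    rw [haσ, haσ]; linarith
  -- sum of a equals sum of |x|
  have hsum : ∑ i, a i = ∑ i, |x i| := by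
    simp only [haσ]
    exact Equiv.sum_comp σ (fun j => |x j|)
  -- pair sum
  have hpair : ∑ p ∈ univ.filter (fun p : Fin n × Fin n => p.1 < p.2), max |x p.1| |x p.2| =
      ∑ p ∈ univ.filter (fun p : Fin n × Fin n => p.1 < p.2), max (a p.1) (a p.2) := by
    rw [← sum_pairs_perm (fun j => |x j|) σ]
    simp only [haσ]
  have hpair2 : ∑ p ∈ univ.filter (fun p : Fin n × Fin n => p.1 < p.2), max (a p.1) (a p.2) =
      ∑ p ∈ univ.filter (fun p : Fin n × Fin n => p.1 < p.2), a p.1 := by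
    apply Finset.sum_congr rfl
    intro p hp
    simp only [mem_filter, mem_univ, true_and] at hp
    exact max_eq_left (hA p.1 p.2 (le_of_lt hp))
  have hcount : ∑ p ∈ univ.filter (fun p : Fin n × Fin n => p.1 < p.2), a p.1 =
      ∑ i : Fin n, ((n : ℝ) - 1 - ((i : ℕ) : ℝ)) * a i := by
    rw [Finset.sum_filter, Fintype.sum_prod_type]
    apply Finset.sum_congr rfl
    intro i _
    simp only [Finset.sum_ite, Finset.sum_const, smul_zero, add_zero, nsmul_eq_mul]
    congr 1
    have : (univ.filter (fun j : Fin n => i < j)) = Finset.Ioi i := by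
      ext j; simp
    rw [this, Fin.card_Ioi]
    have hi : (i : ℕ) < n := i.isLt
    have h1 : 1 ≤ n := Nat.one_le_of_lt (Nat.lt_of_le_of_lt (Nat.zero_le _) hi)
    have h2 : (i : ℕ) ≤ n - 1 := by omega
    push_cast [Nat.cast_sub h2, Nat.cast_sub h1]
    ring
  rw [hpair, hpair2, hcount]
  simp only [owl, ← ha]
  have hr : ∀ i : Fin n, (l1 + l2 * ((n : ℝ) - 1 - (i : ℕ))) * a i
      = l1 * a i + l2 * (((n : ℝ) - 1 - ((i : ℕ) : ℝ)) * a i) := fun i => by ring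
  rw [Finset.sum_congr rfl (fun i _ => hr i), Finset.sum_add_distrib, ← Finset.mul_sum,
    ← Finset.mul_sum, hsum]
end

section
/- Let x ∈ ℝ^n have non-increasing non-negative entries with Ω_w(x) = 1, where w is in the monotone non-negative cone with w ≠ 0. Then x lies in the convex hull of {b^{(1)},...,b^{(n)}}, where b^{(i)} has first i entries equal to τ_i = (Σ_{j=1}^i w_j)^{-1} and the rest zero. Specifically, x = Σ_i θ_i b^{(i)} with θ_i = (x_i − x_{i+1})/τ_i ≥ 0 (taking x_{n+1} = 0) and Σ_i θ_i = 1. -/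
open Finset

/-- tau_i = (w_1 + ... + w_i)⁻¹ (0-indexed: sum over j ≤ i). -/
noncomputable def tau {n : ℕ} (w : Fin n → ℝ) (i : Fin n) : ℝ :=
  (∑ j ∈ Finset.Iic i, w j)⁻¹

/-- The atom b⁽ⁱ⁾: first i+1 entries equal to tau_i, remaining entries zero. -/
noncomputable def atomVec {n : ℕ} (w : Fin n → ℝ) (i : Fin n) : Fin n → ℝ :=
  fun j => if j ≤ i then tau w i else 0

/-- The atomic set A: all signed permutations of the atoms b⁽¹⁾, ..., b⁽ⁿ⁾. -/
noncomputable def atomSet {n : ℕ} (w : Fin n → ℝ) : Set (Fin n → ℝ) :=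
  { a | ∃ (σ : Equiv.Perm (Fin n)) (s : Fin n → ℝ) (i : Fin n),
      (∀ j, s j = 1 ∨ s j = -1) ∧ a = fun j => s j * atomVec w i (σ j) }

/-- Auxiliary: converting a sum over `Ici j` in `Fin n` to a sum over `Ico j n` in `ℕ`. -/
lemma sum_Ici_fin_eq {n : ℕ} (y : Fin n → ℝ) (f : ℕ → ℝ) (j : Fin n)
    (hyf : ∀ i : Fin n, y i = f i.1) :
    ∑ i ∈ Ici j, y i = ∑ k ∈ Finset.Ico j.1 n, f k := by
  have h1 : ∑ i ∈ Ici j, y i = ∑ i : Fin n, if j.1 ≤ i.1 then f i.1 else 0 := by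
    rw [← Finset.sum_filter]
    refine Finset.sum_congr ?_ (fun i hi => hyf i)
    ext i
    simp only [Finset.mem_filter, Finset.mem_Ici, Finset.mem_univ, true_and, Fin.le_def]
  rw [h1, Fin.sum_univ_eq_sum_range (fun k => if j.1 ≤ k then f k else 0) n,
    ← Finset.sum_filter]
  refine Finset.sum_congr ?_ (fun _ _ => rfl)
  ext k; simp only [Finset.mem_filter, Finset.mem_range, Finset.mem_Ico]; omega

/-- If x is non-increasing and non-negative with Omega_w(x) = wᵀx = 1, then x is the
convex combination of the atoms b⁽ⁱ⁾ with coefficients θ_i = (x_i − x_{i+1})/tau_i. -/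
theorem owl_conv_combination {n : ℕ} (w : Fin n → ℝ) (hmono : Antitone w)
    (hnonneg : ∀ i, 0 ≤ w i) (hne : w ≠ 0) (x : Fin n → ℝ)
    (hx : Antitone x) (hx0 : ∀ i, 0 ≤ x i) (hsum : ∑ i, w i * x i = 1)
    (θ : Fin n → ℝ)
    (hθ : ∀ i : Fin n,
      θ i = (x i - if h : (i : ℕ) + 1 < n then x ⟨(i : ℕ) + 1, h⟩ else 0) / tau w i) :
    (∀ i, 0 ≤ θ i) ∧ (∑ i, θ i = 1) ∧ (∀ j, x j = ∑ i, θ i * atomVec w i j) ∧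
      x ∈ convexHull ℝ (Set.range (atomVec w)) := by
  -- positivity of the prefix sums of w
  obtain ⟨k, hk⟩ : ∃ k, w k ≠ 0 := Function.ne_iff.mp hne
  have hwk : 0 < w k := lt_of_le_of_ne (hnonneg k) (Ne.symm hk)
  have hS : ∀ i : Fin n, 0 < ∑ j ∈ Iic i, w j := by
    intro i
    have h0 : (⟨0, i.pos⟩ : Fin n) ∈ Iic i := by
      simp only [Finset.mem_Iic, Fin.le_def]
      exact Nat.zero_le _
    calc (0:ℝ) < w ⟨0, i.pos⟩ := lt_of_lt_of_le hwk (hmono (by simp [Fin.le_def]))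
    _ ≤ ∑ j ∈ Iic i, w j := Finset.single_le_sum (fun j _ => hnonneg j) h0
  -- the successive differences y
  set y : Fin n → ℝ := fun i =>
      x i - (if h : (i : ℕ) + 1 < n then x ⟨(i : ℕ) + 1, h⟩ else 0) with hy
  have hθ' : ∀ i, θ i = y i * ∑ j ∈ Iic i, w j := by
    intro i; rw [hθ i, tau, div_eq_mul_inv, inv_inv]
  have hy0 : ∀ i, 0 ≤ y i := by
    intro i
    simp only [hy]
    split
    · exact sub_nonneg.mpr (hx (by simp [Fin.le_def]))
    · simpa using hx0 i
  -- the ℕ-indexed extension of x and the telescoping identity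
  set X : ℕ → ℝ := fun m => if h : m < n then x ⟨m, h⟩ else 0 with hX
  have hyX : ∀ i : Fin n, y i = X i.1 - X (i.1 + 1) := by
    intro i; simp only [hy, hX, i.isLt, dif_pos]
  have hXn : X n = 0 := by simp [hX]
  have htel : ∀ j : Fin n, ∑ i ∈ Ici j, y i = x j := by
    intro j
    rw [sum_Ici_fin_eq y (fun m => X m - X (m + 1)) j hyX,
      Finset.sum_Ico_eq_sum_range]
    have h := Finset.sum_range_sub' (f := fun m => X (j.1 + m)) (n := n - j.1)
    simp_rw [add_assoc] at h ⊢
    rw [h]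
    have hjn : j.1 + (n - j.1) = n := by omega
    rw [hjn, hXn, sub_zero, Nat.add_zero]
    simp only [hX, j.isLt, dif_pos]
  -- nonnegativity of θ
  have hθ0 : ∀ i, 0 ≤ θ i := fun i => by
    rw [hθ' i]; exact mul_nonneg (hy0 i) (hS i).le
  -- the sum of θ is 1
  have hθsum : ∑ i, θ i = 1 := by
    have hswap : ∑ i, θ i = ∑ j, ∑ i ∈ Ici j, (y i * w j) := by
      simp_rw [hθ', Finset.mul_sum]
      exact Finset.sum_comm' (fun i j => by
        simp only [Finset.mem_univ, true_and, Finset.mem_Iic, Finset.mem_Ici, and_true])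
    rw [hswap]
    calc ∑ j, ∑ i ∈ Ici j, (y i * w j)
        = ∑ j, w j * x j := by
          refine Finset.sum_congr rfl (fun j _ => ?_)
          rw [← Finset.sum_mul, htel j, mul_comm]
      _ = 1 := hsum
  -- the pointwise representation
  have hpt : ∀ j, x j = ∑ i, θ i * atomVec w i j := by
    intro j
    have : ∀ i : Fin n, θ i * atomVec w i j = if j ≤ i then y i else 0 := by
      intro i
      simp only [atomVec, tau, mul_ite, mul_zero]
      rw [hθ' i, mul_assoc, mul_inv_cancel₀ (hS i).ne', mul_one]
    simp_rw [this]
    rw [← htel j, ← Finset.sum_filter]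
    exact (Finset.sum_congr (by ext i; simp) (fun _ _ => rfl)).symm
  refine ⟨hθ0, hθsum, hpt, ?_⟩
  have hxeq : x = ∑ i, θ i • atomVec w i := by
    funext j
    rw [Finset.sum_apply]
    simpa using hpt j
  rw [hxeq]
  exact (convex_convexHull ℝ _).sum_mem (fun i _ => hθ0 i) hθsum
    (fun i _ => subset_convexHull ℝ _ (Set.mem_range_self i))
end

section
/- Let w be in the monotone non-negative cone with w ≠ 0, let b have non-increasing non-negative entries with w^T b = 1, and let Q = DP where P is a permutation matrix and D is a diagonal matrix with ±1 entries. Then w^T Q b ≤ 1. -/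
open Finset

/-- If w is in the monotone non-negative cone, b is non-increasing and non-negative
with wᵀb = 1, and Q = DP is a signed permutation (D diagonal ±1, P a permutation),
then wᵀ(Qb) ≤ 1. -/
theorem signed_perm_inner_le_one {n : ℕ} (w b : Fin n → ℝ)
    (hwmono : Antitone w) (hwnonneg : ∀ i, 0 ≤ w i) (hwne : w ≠ 0)
    (hbmono : Antitone b) (hbnonneg : ∀ i, 0 ≤ b i)
    (hwb : ∑ i, w i * b i = 1)
    (σ : Equiv.Perm (Fin n)) (d : Fin n → ℝ) (hd : ∀ i, d i = 1 ∨ d i = -1) :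
    ∑ i, w i * (d i * b (σ i)) ≤ 1 := by
  have hmono : Monovary b w := by
    intro i j h
    exact hbmono (le_of_not_gt fun hij => absurd (hwmono hij.le) (not_le.2 h))
  have h1 : ∑ i, w i * (d i * b (σ i)) ≤ ∑ i, w i * b (σ i) := by
    apply Finset.sum_le_sum
    intro i _
    have : d i * b (σ i) ≤ b (σ i) := by
      rcases hd i with h | h <;> simp [h]
      nlinarith [hbnonneg (σ i)]
    exact mul_le_mul_of_nonneg_left this (hwnonneg i)
  have h2 : ∑ i, b (σ i) * w i ≤ ∑ i, b i * w i :=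
    hmono.sum_comp_perm_mul_le_sum_mul
  calc ∑ i, w i * (d i * b (σ i)) ≤ ∑ i, w i * b (σ i) := h1
    _ = ∑ i, b (σ i) * w i := by simp [mul_comm]
    _ ≤ ∑ i, b i * w i := h2
    _ = 1 := by rw [← hwb]; simp [mul_comm]
end

section
/- The dual norm of the OWL norm Ω_w satisfies Ω_w*(x) = max over i = 1,...,n of τ_i ‖x_(i)‖_1, where τ_i = (Σ_{j=1}^i w_j)^{-1} and ‖x_(i)‖_1 = Σ_{j=1}^i |x|_[j] is the sum of the i largest magnitudes of x. -/
open Finset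

lemma abel_aux (A g : ℕ → ℝ) : ∀ n : ℕ,
    ∑ i ∈ range n, A i * g i =
      (∑ k ∈ range n, (A k - A (k+1)) * ∑ i ∈ range (k+1), g i) + A n * ∑ i ∈ range n, g i
  | 0 => by simp
  | (n+1) => by
      rw [sum_range_succ, abel_aux A g n,
        sum_range_succ (fun k => (A k - A (k+1)) * ∑ i ∈ range (k+1), g i),
        sum_range_succ g n]
      ring

lemma sum_Iic_fin {n : ℕ} (b : Fin n → ℝ) (i : Fin n) :
    ∑ j ∈ Finset.Iic i, b j
      = ∑ k ∈ Finset.range (i.1+1), (if h : k < n then b ⟨k, h⟩ else 0) := by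
  refine Finset.sum_bij' (fun (j : Fin n) (_ : j ∈ Finset.Iic i) => j.1)
    (fun k hk => (⟨k, Nat.lt_of_le_of_lt (Nat.lt_succ_iff.mp (Finset.mem_range.1 hk)) i.2⟩ : Fin n))
    ?_ ?_ ?_ ?_ ?_
  · intro j hj
    have h1 : j ≤ i := Finset.mem_Iic.1 hj
    have h2 : j.1 ≤ i.1 := h1
    show j.1 ∈ Finset.range (i.1+1)
    exact Finset.mem_range.2 (Nat.lt_succ_of_le h2)
  · intro k hk
    have h2 : k ≤ i.1 := Nat.lt_succ_iff.mp (Finset.mem_range.1 hk)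
    exact Finset.mem_Iic.2 (Fin.mk_le_of_le_val h2)
  · intro j hj; simp
  · intro k hk; simp
  · intro j hj; simp

lemma key_ineq {n : ℕ} (w a b : Fin n → ℝ) (M : ℝ)
    (ha : Antitone a) (ha0 : ∀ i, 0 ≤ a i) (hM0 : 0 ≤ M)
    (hMB : ∀ i : Fin n, ∑ j ∈ Finset.Iic i, b j ≤ M * ∑ j ∈ Finset.Iic i, w j)
    (hwa : ∑ i, w i * a i ≤ 1) :
    ∑ i, a i * b i ≤ M := by
  set A : ℕ → ℝ := fun k => if h : k < n then a ⟨k, h⟩ else 0 with hA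
  set Bg : ℕ → ℝ := fun k => if h : k < n then b ⟨k, h⟩ else 0 with hBg
  set Wg : ℕ → ℝ := fun k => if h : k < n then w ⟨k, h⟩ else 0 with hWg
  have hAn : A n = 0 := by simp [hA]
  have hd : ∀ k, 0 ≤ A k - A (k+1) := by
    intro k
    simp only [hA]
    by_cases h1 : k + 1 < n
    · have h0 : k < n := by omega
      rw [dif_pos h0, dif_pos h1]
      have := ha (show (⟨k, h0⟩ : Fin n) ≤ ⟨k+1, h1⟩ from by simp [Fin.le_def])
      linarith
    · rw [dif_neg h1]
      by_cases h0 : k < n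
      · rw [dif_pos h0]; simpa using ha0 _
      · rw [dif_neg h0]; simp
  have step1 : ∀ c : Fin n → ℝ, ∑ i, c i * b i = ∑ i ∈ range n, (fun k => if h : k < n then c ⟨k,h⟩ else 0) i * Bg i := by
    intro c
    rw [← Fin.sum_univ_eq_sum_range]
    exact Finset.sum_congr rfl fun i _ => by simp [hBg]
  have step1' : ∑ i, w i * a i = ∑ i ∈ range n, A i * Wg i := by
    rw [← Fin.sum_univ_eq_sum_range]
    refine Finset.sum_congr rfl fun i _ => ?_
    simp [hA, hWg, mul_comm]
  have habB := abel_aux A Bg n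
  have habW := abel_aux A Wg n
  rw [hAn, zero_mul, add_zero] at habB habW
  have e1 : ∑ i, a i * b i = ∑ k ∈ range n, (A k - A (k+1)) * ∑ i ∈ range (k+1), Bg i := by
    rw [show (∑ i, a i * b i) = ∑ i ∈ range n, A i * Bg i from ?_, habB]
    rw [← Fin.sum_univ_eq_sum_range]
    exact Finset.sum_congr rfl fun i _ => by simp [hA, hBg]
  rw [e1]
  have e2 : ∀ k ∈ range n, (A k - A (k+1)) * ∑ i ∈ range (k+1), Bg i
      ≤ (A k - A (k+1)) * (M * ∑ i ∈ range (k+1), Wg i) := by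
    intro k hk
    have hkn : k < n := mem_range.1 hk
    refine mul_le_mul_of_nonneg_left ?_ (hd k)
    have hB := sum_Iic_fin b ⟨k, hkn⟩
    have hW := sum_Iic_fin w ⟨k, hkn⟩
    simp only at hB hW
    rw [← hB, ← hW]
    exact hMB ⟨k, hkn⟩
  calc ∑ k ∈ range n, (A k - A (k+1)) * ∑ i ∈ range (k+1), Bg i
      ≤ ∑ k ∈ range n, (A k - A (k+1)) * (M * ∑ i ∈ range (k+1), Wg i) :=
        Finset.sum_le_sum e2
    _ = M * ∑ k ∈ range n, (A k - A (k+1)) * ∑ i ∈ range (k+1), Wg i := by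
        rw [Finset.mul_sum]; exact Finset.sum_congr rfl fun k _ => by ring
    _ = M * ∑ i ∈ range n, A i * Wg i := by rw [habW]
    _ = M * ∑ i, w i * a i := by rw [step1']
    _ ≤ M * 1 := mul_le_mul_of_nonneg_left hwa hM0
    _ = M := mul_one M

lemma absSorted_nonneg {n : ℕ} (x : Fin n → ℝ) (i : Fin n) : 0 ≤ absSorted x i :=
  abs_nonneg _

/-- The dual norm of the OWL norm: Omega_w*(x) = max_i tau_i * (sum of the i largest
magnitudes of x). -/
theorem owl_dual_norm {n : ℕ} (hn : 0 < n) (w : Fin n → ℝ) (hmono : Antitone w)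
    (hnonneg : ∀ i, 0 ≤ w i) (hne : w ≠ 0) (x : Fin n → ℝ) :
    sSup {y : ℝ | ∃ u : Fin n → ℝ, owl w u ≤ 1 ∧ y = ∑ i, u i * x i} =
      univ.sup' ⟨⟨0, hn⟩, mem_univ _⟩
        (fun i : Fin n => tau w i * ∑ j ∈ Finset.Iic i, absSorted x j) := by
  set σx := Tuple.sort (fun j => -|x j|) with hσx
  set b := absSorted x with hb
  set M := univ.sup' ⟨⟨0, hn⟩, mem_univ _⟩
      (fun i : Fin n => tau w i * ∑ j ∈ Finset.Iic i, b j) with hM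
  -- positivity of partial sums of w
  have hw0 : 0 < w ⟨0, hn⟩ := by
    obtain ⟨k, hk⟩ := Function.ne_iff.1 hne
    have hkpos : 0 < w k := lt_of_le_of_ne (hnonneg k) (by simpa [eq_comm] using hk)
    calc (0:ℝ) < w k := hkpos
      _ ≤ w ⟨0, hn⟩ := hmono (by simp [Fin.le_def])
  have hW : ∀ i : Fin n, 0 < ∑ j ∈ Finset.Iic i, w j := by
    intro i
    have hmem : (⟨0, hn⟩ : Fin n) ∈ Finset.Iic i := by
      simp [Finset.mem_Iic, Fin.le_def]
    exact lt_of_lt_of_le hw0 (Finset.single_le_sum (fun j _ => hnonneg j) hmem)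
  have htau : ∀ i : Fin n, 0 < tau w i := fun i => inv_pos.2 (hW i)
  have hBn : ∀ i : Fin n, 0 ≤ ∑ j ∈ Finset.Iic i, b j :=
    fun i => Finset.sum_nonneg fun j _ => absSorted_nonneg x j
  have hM0 : 0 ≤ M := by
    have := Finset.le_sup' (f := fun i : Fin n => tau w i * ∑ j ∈ Finset.Iic i, b j)
      (mem_univ (⟨0, hn⟩ : Fin n))
    exact le_trans (mul_nonneg (le_of_lt (htau _)) (hBn _)) this
  have hMB : ∀ i : Fin n, ∑ j ∈ Finset.Iic i, b j ≤ M * ∑ j ∈ Finset.Iic i, w j := by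
    intro i
    have h1 : tau w i * ∑ j ∈ Finset.Iic i, b j ≤ M :=
      Finset.le_sup' (f := fun i : Fin n => tau w i * ∑ j ∈ Finset.Iic i, b j) (mem_univ i)
    have hWi := hW i
    have : (∑ j ∈ Finset.Iic i, b j) = (∑ j ∈ Finset.Iic i, w j) * (tau w i * ∑ j ∈ Finset.Iic i, b j) := by
      rw [tau]; field_simp
    rw [this, mul_comm M]
    exact mul_le_mul_of_nonneg_left h1 (le_of_lt hWi)
  -- Upper bound
  have hub : ∀ y ∈ {y : ℝ | ∃ u : Fin n → ℝ, owl w u ≤ 1 ∧ y = ∑ i, u i * x i}, y ≤ M := by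
    rintro y ⟨u, hu, rfl⟩
    set σu := Tuple.sort (fun j => -|u j|) with hσu
    set a := absSorted u with ha
    have haanti : Antitone a := absSorted_antitone u
    have ha0 : ∀ i, 0 ≤ a i := absSorted_nonneg u
    have hwa : ∑ i, w i * a i ≤ 1 := hu
    have s1 : ∑ i, u i * x i ≤ ∑ i, |u i| * |x i| :=
      Finset.sum_le_sum fun i _ => by
        rw [← abs_mul]; exact le_abs_self _
    have s2 : ∑ i, |u i| * |x i| = ∑ k, a k * b ((σu.trans σx.symm) k) := by
      rw [← Equiv.sum_comp σu (fun i => |u i| * |x i|)]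
      refine Finset.sum_congr rfl fun k _ => ?_
      simp [ha, hb, absSorted, hσu, hσx]
    have s3 : ∑ k, a k * b ((σu.trans σx.symm) k) ≤ ∑ k, a k * b k :=
      (haanti.monovary (absSorted_antitone x)).sum_mul_comp_perm_le_sum_mul
    have s4 : ∑ k, a k * b k ≤ M := key_ineq w a b M haanti ha0 hM0 hMB hwa
    linarith
  -- Attainment
  obtain ⟨i, _, hi⟩ := Finset.exists_mem_eq_sup' (⟨⟨0, hn⟩, mem_univ _⟩ : (univ : Finset (Fin n)).Nonempty)
    (fun i : Fin n => tau w i * ∑ j ∈ Finset.Iic i, b j)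
  set u : Fin n → ℝ := fun j => (if x j < 0 then (-1:ℝ) else 1) * atomVec w i (σx.symm j) with hu
  have hatom0 : ∀ j, 0 ≤ atomVec w i j := by
    intro j; rw [atomVec]; split
    · exact le_of_lt (htau i)
    · exact le_refl 0
  have habs : ∀ j, |u j| = atomVec w i (σx.symm j) := by
    intro j
    rw [hu]
    simp only []
    rw [abs_mul, abs_of_nonneg (hatom0 _)]
    split <;> simp
  have hatomanti : Antitone (atomVec w i) := by
    intro j k hjk
    simp only [atomVec]
    by_cases hk : k ≤ i
    · rw [if_pos hk, if_pos (le_trans hjk hk)]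
    · rw [if_neg hk]
      split
      · exact le_of_lt (htau i)
      · exact le_refl 0
  have hsorted : absSorted u = atomVec w i := by
    have h1 : Monotone ((fun j => -|u j|) ∘ (Tuple.sort (fun j => -|u j|))) :=
      Tuple.monotone_sort _
    have h2 : Monotone ((fun j => -|u j|) ∘ σx) := by
      intro j k hjk
      simp only [Function.comp_apply, habs]
      simp only [Equiv.symm_apply_apply]
      have := hatomanti hjk
      linarith
    have h3 := Tuple.unique_monotone h1 h2
    funext k
    have h4 := congrFun h3 k
    simp only [Function.comp_apply] at h4
    have h5 : |u (Tuple.sort (fun j => -|u j|) k)| = |u (σx k)| := by linarith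
    rw [absSorted, h5, habs, Equiv.symm_apply_apply]
  have howl : owl w u = 1 := by
    rw [owl, hsorted]
    have : ∀ k : Fin n, w k * atomVec w i k = if k ≤ i then w k * tau w i else 0 := by
      intro k; rw [atomVec]; split <;> simp
    rw [Finset.sum_congr rfl fun k _ => this k]
    rw [show (∑ k : Fin n, if k ≤ i then w k * tau w i else 0)
        = ∑ k : Fin n, (if k ∈ Finset.Iic i then w k * tau w i else 0) from
      Finset.sum_congr rfl fun k _ => by simp [Finset.mem_Iic]]
    rw [Finset.sum_ite_mem univ (Finset.Iic i) _, Finset.univ_inter, ← Finset.sum_mul]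
    rw [tau, mul_inv_cancel₀ (ne_of_gt (hW i))]
  have hval : ∑ j, u j * x j = M := by
    have p1 : ∀ j, u j * x j = atomVec w i (σx.symm j) * |x j| := by
      intro j
      rw [hu]
      simp only []
      by_cases hxj : x j < 0
      · rw [if_pos hxj, abs_of_neg hxj]; ring
      · rw [if_neg hxj, abs_of_nonneg (not_lt.1 hxj)]; ring
    rw [Finset.sum_congr rfl fun j _ => p1 j]
    rw [← Equiv.sum_comp σx (fun j => atomVec w i (σx.symm j) * |x j|)]
    have p2 : ∀ k : Fin n, atomVec w i (σx.symm (σx k)) * |x (σx k)|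
        = if k ≤ i then tau w i * b k else 0 := by
      intro k
      rw [Equiv.symm_apply_apply, atomVec]
      split
      · rw [hb, absSorted, hσx]
      · simp
    rw [Finset.sum_congr rfl fun k _ => p2 k]
    rw [show (∑ k : Fin n, if k ≤ i then tau w i * b k else 0)
        = ∑ k : Fin n, (if k ∈ Finset.Iic i then tau w i * b k else 0) from
      Finset.sum_congr rfl fun k _ => by simp [Finset.mem_Iic]]
    rw [Finset.sum_ite_mem univ (Finset.Iic i) _, Finset.univ_inter, ← Finset.mul_sum]
    rw [hM, hi]
  have hmem : M ∈ {y : ℝ | ∃ u : Fin n → ℝ, owl w u ≤ 1 ∧ y = ∑ i, u i * x i} :=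
    ⟨u, le_of_eq howl, hval.symm⟩
  exact le_antisymm (csSup_le ⟨M, hmem⟩ hub) (le_csSup ⟨M, hub⟩ hmem)
end

section
/- The proximity operator of the OWL norm preserves signs: prox_{Ω_w}(v) = sign(v) ⊙ prox_{Ω_w}(|v|), where ⊙ is the entry-wise product. -/
open Finset

/-- The objective defining the proximity operator of Omega_w at v. -/
noncomputable def proxObj {n : ℕ} (w v x : Fin n → ℝ) : ℝ :=
  (1 / 2) * ∑ i, (x i - v i) ^ 2 + owl w x

lemma owl_perm_le {n : ℕ} (w : Fin n → ℝ) (hmono : Antitone w)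
    (x : Fin n → ℝ) (π : Equiv.Perm (Fin n)) :
    ∑ i, w i * |x (π i)| ≤ owl w x := by
  set σ : Equiv.Perm (Fin n) := Tuple.sort (fun j => -|x j|) with hσ
  set u : Fin n → ℝ := fun i => |x (σ i)| with hu
  have hus : Antitone u := by
    intro i j hij
    have := Tuple.monotone_sort (fun j => -|x j|) hij
    simpa [u, Function.comp] using this
  have hmv : Monovary u w := by
    intro i j hij
    have hji : j < i := by
      by_contra h
      exact absurd (hmono (le_of_not_gt h)) (not_le.mpr hij)
    exact hus hji.le
  have key := hmv.sum_comp_perm_mul_le_sum_mul (σ := π.trans σ.symm)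
  have h1 : ∑ i, w i * |x (π i)| = ∑ i, u ((π.trans σ.symm) i) * w i := by
    apply Finset.sum_congr rfl
    intro i _
    simp [u, mul_comm]
  have h2 : owl w x = ∑ i, u i * w i := by
    apply Finset.sum_congr rfl
    intro i _
    simp [owl, absSorted, u, mul_comm, ← hσ]
  rw [h1, h2]
  exact key

lemma owl_mono {n : ℕ} (w : Fin n → ℝ) (hmono : Antitone w)
    (hnonneg : ∀ i, 0 ≤ w i) (a b : Fin n → ℝ)
    (hab : ∀ i, |a i| ≤ |b i|) : owl w a ≤ owl w b := by
  set σ : Equiv.Perm (Fin n) := Tuple.sort (fun j => -|a j|) with hσ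
  have h1 : owl w a = ∑ i, w i * |a (σ i)| := by
    apply Finset.sum_congr rfl
    intro i _
    simp [owl, absSorted, ← hσ]
  rw [h1]
  calc ∑ i, w i * |a (σ i)| ≤ ∑ i, w i * |b (σ i)| := by
        apply Finset.sum_le_sum
        intro i _
        exact mul_le_mul_of_nonneg_left (hab _) (hnonneg i)
    _ ≤ owl w b := owl_perm_le w hmono b σ

lemma owl_abs {n : ℕ} (w : Fin n → ℝ) (x : Fin n → ℝ) :
    owl w (fun i => |x i|) = owl w x := by
  simp [owl, absSorted, abs_abs]

lemma owl_midpoint {n : ℕ} (w : Fin n → ℝ) (hmono : Antitone w)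
    (hnonneg : ∀ i, 0 ≤ w i) (a b : Fin n → ℝ) :
    owl w (fun i => (a i + b i) / 2) ≤ owl w a / 2 + owl w b / 2 := by
  set m : Fin n → ℝ := fun i => (a i + b i) / 2 with hm
  set σ : Equiv.Perm (Fin n) := Tuple.sort (fun j => -|m j|) with hσ
  have h1 : owl w m = ∑ i, w i * |m (σ i)| := by
    apply Finset.sum_congr rfl
    intro i _
    simp [owl, absSorted, ← hσ, m]
  rw [h1]
  calc ∑ i, w i * |m (σ i)|
      ≤ ∑ i, (w i * |a (σ i)| / 2 + w i * |b (σ i)| / 2) := by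
        apply Finset.sum_le_sum
        intro i _
        have : |m (σ i)| ≤ |a (σ i)| / 2 + |b (σ i)| / 2 := by
          simp only [m]
          have h := abs_add_le (a (σ i)) (b (σ i))
          have h2 : |(a (σ i) + b (σ i)) / 2| = |a (σ i) + b (σ i)| / 2 := by
            rw [abs_div, abs_two]
          linarith
        nlinarith [hnonneg i, mul_le_mul_of_nonneg_left this (hnonneg i)]
    _ = (∑ i, w i * |a (σ i)|) / 2 + (∑ i, w i * |b (σ i)|) / 2 := by
        rw [Finset.sum_add_distrib, ← Finset.sum_div, ← Finset.sum_div]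
    _ ≤ owl w a / 2 + owl w b / 2 := by
        have ha := owl_perm_le w hmono a σ
        have hb := owl_perm_le w hmono b σ
        linarith

/-- The proximity operator of the OWL norm preserves signs:
prox(v) = sign(v) ⊙ prox(|v|). -/
theorem owl_prox_sign {n : ℕ} (w : Fin n → ℝ) (hmono : Antitone w)
    (hnonneg : ∀ i, 0 ≤ w i) (v p q : Fin n → ℝ)
    (hp : ∀ x, proxObj w v p ≤ proxObj w v x)
    (hq : ∀ x, proxObj w (fun i => |v i|) q ≤ proxObj w (fun i => |v i|) x) :
    p = fun i => Real.sign (v i) * q i := by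
  set r : Fin n → ℝ := fun i => Real.sign (v i) * q i with hr
  -- step 1: proxObj w v r ≤ proxObj w (|v|) q
  have step1 : proxObj w v r ≤ proxObj w (fun i => |v i|) q := by
    unfold proxObj
    have hquad : ∑ i, (r i - v i) ^ 2 ≤ ∑ i, (q i - |v i|) ^ 2 := by
      apply Finset.sum_le_sum
      intro i _
      rcases lt_trichotomy (v i) 0 with h | h | h
      · rw [show r i = -q i by simp [r, Real.sign_of_neg h],
          abs_of_neg h]; nlinarith
      · rw [show r i = 0 by simp [r, h], h]
        simpa using sq_nonneg (q i)
      · rw [show r i = q i by simp [r, Real.sign_of_pos h],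
          abs_of_pos h]
    have howl : owl w r ≤ owl w q := by
      apply owl_mono w hmono hnonneg
      intro i
      rcases lt_trichotomy (v i) 0 with h | h | h
      · simp [r, Real.sign_of_neg h]
      · simp [r, h]
      · simp [r, Real.sign_of_pos h]
    have : (1:ℝ)/2 * ∑ i, (r i - v i) ^ 2 ≤ 1/2 * ∑ i, (q i - |v i|) ^ 2 := by
      linarith
    linarith
  -- step 2: proxObj w (|v|) (|p|) ≤ proxObj w v p
  have step2 : proxObj w (fun i => |v i|) (fun i => |p i|) ≤ proxObj w v p := by
    have e1 : proxObj w (fun i => |v i|) (fun i => |p i|)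
        = 1/2 * ∑ i, (|p i| - |v i|) ^ 2 + owl w p := by
      simp [proxObj, owl_abs]
    have e2 : proxObj w v p = 1/2 * ∑ i, (p i - v i) ^ 2 + owl w p := rfl
    rw [e1, e2]
    have hquad : ∑ i, (|p i| - |v i|) ^ 2 ≤ ∑ i, (p i - v i) ^ 2 := by
      apply Finset.sum_le_sum
      intro i _
      have := abs_abs_sub_abs_le_abs_sub (p i) (v i)
      calc (|p i| - |v i|) ^ 2 = (|(|p i| - |v i|)|) ^ 2 := (sq_abs _).symm
        _ ≤ (|p i - v i|) ^ 2 := pow_le_pow_left₀ (abs_nonneg _) this 2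
        _ = (p i - v i) ^ 2 := sq_abs _
    linarith
  -- chain: proxObj w v p = proxObj w v r
  have hchain : proxObj w v p = proxObj w v r := by
    have h1 := hp r
    have h2 := hq (fun i => |p i|)
    linarith
  -- midpoint argument
  set m : Fin n → ℝ := fun i => (p i + r i) / 2 with hm
  have hquadm : (1:ℝ)/2 * ∑ i, (m i - v i) ^ 2
      = (1/2 * ∑ i, (p i - v i)^2) / 2 + (1/2 * ∑ i, (r i - v i)^2) / 2
        - (∑ i, (p i - r i)^2) / 8 := by
    have : ∀ i ∈ Finset.univ, (m i - v i)^2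
        = (p i - v i)^2 / 2 + (r i - v i)^2 / 2 - (p i - r i)^2 / 4 := by
      intro i _
      simp only [m]
      ring
    rw [Finset.sum_congr rfl this]
    rw [Finset.sum_sub_distrib, Finset.sum_add_distrib, ← Finset.sum_div,
      ← Finset.sum_div, ← Finset.sum_div]
    ring
  have howlm : owl w m ≤ owl w p / 2 + owl w r / 2 :=
    owl_midpoint w hmono hnonneg p r
  have hle : proxObj w v p ≤ proxObj w v m := hp m
  have hobj : proxObj w v m ≤ proxObj w v p - (∑ i, (p i - r i)^2) / 8 := by
    unfold proxObj
    rw [hquadm]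
    have hpr : proxObj w v p = proxObj w v r := hchain
    unfold proxObj at hpr
    linarith
  have hsum0 : ∑ i, (p i - r i)^2 ≤ 0 := by linarith
  have hzero : ∀ i ∈ Finset.univ, (p i - r i)^2 = 0 := by
    intro i hi
    have hnn : ∀ j ∈ Finset.univ, (0:ℝ) ≤ (p j - r j)^2 := fun j _ => sq_nonneg _
    have := Finset.sum_nonneg hnn
    have hsum : ∑ i, (p i - r i)^2 = 0 := le_antisymm hsum0 this
    exact (Finset.sum_eq_zero_iff_of_nonneg hnn).mp hsum i hi
  funext i
  have := hzero i (Finset.mem_univ i)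
  have : p i - r i = 0 := by
    nlinarith [sq_nonneg (p i - r i)]
  simp only [r] at this ⊢
  linarith
end

section
/- The Euclidean projection onto the monotone non-negative cone K_{m+} equals the composition of the projection onto the monotone cone K_m followed by the projection onto the non-negative orthant: proj_{K_{m+}}(v) = proj_{ℝ^n_+}(proj_{K_m}(v)) for all v ∈ ℝ^n. -/
open Finset

/-- The monotone cone in ℝⁿ. -/
def monoCone (n : ℕ) : Set (Fin n → ℝ) := { x | Antitone x }

/-- The monotone non-negative cone in ℝⁿ. -/
def monoNonnegCone (n : ℕ) : Set (Fin n → ℝ) :=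
  { x | Antitone x ∧ ∀ i, 0 ≤ x i }

private lemma quad_expand {n : ℕ} (v p y : Fin n → ℝ) (t : ℝ) :
    ∑ i, (p i + t * y i - v i) ^ 2 =
      ∑ i, (p i - v i) ^ 2 + 2 * t * (∑ i, y i * (p i - v i)) + t ^ 2 * ∑ i, (y i) ^ 2 := by
  simp only [Finset.mul_sum, ← Finset.sum_add_distrib]
  exact Finset.sum_congr rfl fun i _ => by ring

private lemma sign_nonneg (A B : ℝ) (hB : 0 ≤ B)
    (H : ∀ t : ℝ, 0 ≤ t → t ≤ 1 → 0 ≤ 2 * t * A + t ^ 2 * B) : 0 ≤ A := by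
  by_contra hA
  push_neg at hA
  have hd : 0 < B - A := by linarith
  set t := -A / (B - A) with ht
  have ht0 : 0 ≤ t := div_nonneg (by linarith) hd.le
  have ht1 : t ≤ 1 := by rw [ht, div_le_one hd]; linarith
  have hts : t * (B - A) = -A := div_mul_cancel₀ _ hd.ne'
  have hH := H t ht0 ht1
  have e1 : (2 * t * A + t ^ 2 * B) * (B - A) ^ 2 = -2 * A ^ 2 * (B - A) + A ^ 2 * B := by
    linear_combination (2 * A * (B - A) + B * t * (B - A) - A * B) * hts
  nlinarith [mul_nonneg hH (sq_nonneg (B - A)), mul_nonneg (sq_nonneg A) hB,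
    mul_pos (mul_pos (neg_pos.mpr hA) (neg_pos.mpr hA)) (neg_pos.mpr hA)]

/-- The Euclidean projection onto the monotone non-negative cone is the projection
onto the monotone cone followed by entry-wise clipping at zero. -/
theorem proj_monoNonnegCone_eq_clip_proj_monoCone {n : ℕ} (v p : Fin n → ℝ)
    (hp : p ∈ monoCone n ∧ ∀ x ∈ monoCone n,
      ∑ i, (p i - v i) ^ 2 ≤ ∑ i, (x i - v i) ^ 2) :
    (fun i => max (p i) 0) ∈ monoNonnegCone n ∧
      ∀ x ∈ monoNonnegCone n,
        ∑ i, (max (p i) 0 - v i) ^ 2 ≤ ∑ i, (x i - v i) ^ 2 := by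
  have hpa : Antitone p := hp.1
  -- the key variational inequality along admissible directions
  have main : ∀ y : Fin n → ℝ,
      (∀ t : ℝ, 0 ≤ t → t ≤ 1 → Antitone (fun i => p i + t * y i)) →
      0 ≤ ∑ i, y i * (p i - v i) := by
    intro y hy
    apply sign_nonneg _ _ (Finset.sum_nonneg fun i _ => sq_nonneg (y i))
    intro t ht0 ht1
    have h3 : ∑ i, (p i - v i) ^ 2 ≤ ∑ i, (p i + t * y i - v i) ^ 2 :=
      hp.2 _ (hy t ht0 ht1)
    rw [quad_expand] at h3
    linarith
  -- p itself and -p are admissible directions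
  have hSp : ∑ i, p i * (p i - v i) = 0 := by
    have h1 : 0 ≤ ∑ i, p i * (p i - v i) := by
      apply main
      intro t ht0 ht1 i j hij
      simp only
      have := hpa hij
      nlinarith [mul_nonneg ht0 (sub_nonneg.mpr this)]
    have h2 : 0 ≤ ∑ i, (-(p i)) * (p i - v i) := by
      apply main
      intro t ht0 ht1 i j hij
      simp only
      have := hpa hij
      nlinarith [mul_nonneg (sub_nonneg.mpr ht1) (sub_nonneg.mpr this)]
    have h4 : ∑ i, (-(p i)) * (p i - v i) = -∑ i, p i * (p i - v i) := by
      simp [neg_mul, Finset.sum_neg_distrib]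
    linarith [h1, h2, h4.symm ▸ h2]
  -- min(p,0) and -min(p,0) are admissible directions
  have hSw : ∑ i, (min (p i) 0) * (p i - v i) = 0 := by
    have h1 : 0 ≤ ∑ i, (min (p i) 0) * (p i - v i) := by
      apply main
      intro t ht0 ht1 i j hij
      simp only
      have hmin : min (p j) 0 ≤ min (p i) 0 := min_le_min (hpa hij) le_rfl
      have hmax : max (p j) 0 ≤ max (p i) 0 := max_le_max (hpa hij) le_rfl
      have ei : max (p i) 0 + min (p i) 0 = p i + 0 := max_add_min _ _
      have ej : max (p j) 0 + min (p j) 0 = p j + 0 := max_add_min _ _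
      have := mul_nonneg ht0 (sub_nonneg.mpr hmin)
      nlinarith
    have h2 : 0 ≤ ∑ i, (-(min (p i) 0)) * (p i - v i) := by
      apply main
      intro t ht0 ht1 i j hij
      simp only
      have hmin : min (p j) 0 ≤ min (p i) 0 := min_le_min (hpa hij) le_rfl
      have hmax : max (p j) 0 ≤ max (p i) 0 := max_le_max (hpa hij) le_rfl
      have ei : max (p i) 0 + min (p i) 0 = p i + 0 := max_add_min _ _
      have ej : max (p j) 0 + min (p j) 0 = p j + 0 := max_add_min _ _
      have := mul_nonneg (sub_nonneg.mpr ht1) (sub_nonneg.mpr hmin)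
      nlinarith
    have h4 : ∑ i, (-(min (p i) 0)) * (p i - v i) = -∑ i, (min (p i) 0) * (p i - v i) := by
      simp [neg_mul, Finset.sum_neg_distrib]
    rw [h4] at h2
    linarith
  refine ⟨⟨fun i j hij => max_le_max (hpa hij) le_rfl, fun i => le_max_right _ _⟩, ?_⟩
  intro x hx
  obtain ⟨hx1, hx2⟩ := hx
  have hAx : 0 ≤ ∑ i, x i * (p i - v i) := by
    apply main
    intro t ht0 ht1 i j hij
    simp only
    have h1 := hpa hij
    have h2 := hx1 hij
    nlinarith [mul_nonneg ht0 (sub_nonneg.mpr h2)]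
  have sum_id : ∑ i, (x i - v i) ^ 2 =
      ∑ i, (max (p i) 0 - v i) ^ 2 + ∑ i, (x i - max (p i) 0) ^ 2
        + 2 * ∑ i, (x i - max (p i) 0) * (max (p i) 0 - p i)
        + 2 * ∑ i, x i * (p i - v i) - 2 * ∑ i, p i * (p i - v i)
        + 2 * ∑ i, (min (p i) 0) * (p i - v i) := by
    simp only [Finset.mul_sum, ← Finset.sum_add_distrib, ← Finset.sum_sub_distrib]
    refine Finset.sum_congr rfl fun i _ => ?_
    have hq : max (p i) 0 = p i - min (p i) 0 := by
      rcases le_total (p i) 0 with h | h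
      · rw [max_eq_right h, min_eq_left h]; ring
      · rw [max_eq_left h, min_eq_right h]; ring
    rw [hq]; ring
  have S1 : 0 ≤ ∑ i, (x i - max (p i) 0) ^ 2 :=
    Finset.sum_nonneg fun i _ => sq_nonneg _
  have S2 : 0 ≤ ∑ i, (x i - max (p i) 0) * (max (p i) 0 - p i) := by
    apply Finset.sum_nonneg
    intro i _
    rcases le_total (p i) 0 with h | h
    · rw [max_eq_right h]
      have := hx2 i
      nlinarith
    · rw [max_eq_left h]
      simp
  linarith
end
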